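/- Let G be a simple connected graph such that ν(G \ x) = ν(G) for every vertex x. Then G is factor-critical, i.e., G \ x has a perfect matching for every vertex x (Gallai's lemma); in particular |V(G)| = 2ν(G) + 1. -/

import Mathlib

open scoped Classical

/-- `M` is a matching of `G`, given as a finite set of edges. -/
def IsMatchingFinset {V : Type*} (G : SimpleGraph V) (M : Finset (Sym2 V)) : Prop :=
  (M : Set (Sym2 V)) ⊆ G.edgeSet ∧
    ∀ e ∈ M, ∀ f ∈ M, e ≠ f → ∀ v : V, ¬(v ∈ e ∧ v ∈ f)

/-- ν(G): the maximum size of a matching of `G`. -/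
noncomputable def matchingNumber {V : Type*} (G : SimpleGraph V) : ℕ :=
  sSup {n | ∃ M : Finset (Sym2 V), IsMatchingFinset G M ∧ M.card = n}

/-- A proper edge coloring of `G` using colors `< n`. -/
def IsProperEdgeColoring {V : Type*} (G : SimpleGraph V) (n : ℕ) (c : Sym2 V → ℕ) : Prop :=
  (∀ e ∈ G.edgeSet, c e < n) ∧
    ∀ e ∈ G.edgeSet, ∀ f ∈ G.edgeSet, e ≠ f → (∃ v : V, v ∈ e ∧ v ∈ f) → c e ≠ c f

/-- χ'(G): the edge chromatic index of `G`. -/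
noncomputable def chromaticIndex {V : Type*} (G : SimpleGraph V) : ℕ :=
  sInf {n | ∃ c : Sym2 V → ℕ, IsProperEdgeColoring G n c}

/-- `G` is friendly-edge-colorable: its edge set is partitioned into maximum matchings. -/
noncomputable def Friendly {V : Type*} [Fintype V] (G : SimpleGraph V) : Prop :=
  ∃ P : Finset (Finset (Sym2 V)),
    (∀ M ∈ P, IsMatchingFinset G M ∧ M.card = matchingNumber G) ∧
    (∀ e, e ∈ G.edgeFinset ↔ ∃ M ∈ P, e ∈ M) ∧
    ∀ M ∈ P, ∀ N ∈ P, M ≠ N → Disjoint M N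

/-- The graph `G` with vertex `x` deleted. -/
def delVert {V : Type*} (G : SimpleGraph V) (x : V) : SimpleGraph {v : V // v ≠ x} :=
  G.induce {v : V | v ≠ x}

/-- `G` has a perfect matching. -/
def HasPerfectMatchingFinset {V : Type*} (G : SimpleGraph V) : Prop :=
  ∃ M : Finset (Sym2 V), IsMatchingFinset G M ∧ ∀ v : V, ∃ e ∈ M, v ∈ e

/-- `G` is factor-critical. -/
def FactorCritical {V : Type*} (G : SimpleGraph V) : Prop :=
  G.Connected ∧ ∀ x : V, HasPerfectMatchingFinset (delVert G x)


namespace GallaiAux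

variable {V : Type*}

/-- `v` is unmatched by `M`. -/
def Unm (M : Finset (Sym2 V)) (v : V) : Prop := ∀ e ∈ M, v ∉ e

lemma matchingSet_nonempty (G : SimpleGraph V) :
    Set.Nonempty {n | ∃ M : Finset (Sym2 V), IsMatchingFinset G M ∧ M.card = n} :=
  ⟨0, ∅, ⟨by simp, by simp⟩, rfl⟩

lemma matchingSet_bddAbove [Fintype V] (G : SimpleGraph V) :
    BddAbove {n | ∃ M : Finset (Sym2 V), IsMatchingFinset G M ∧ M.card = n} := by
  refine ⟨G.edgeFinset.card, ?_⟩
  rintro n ⟨M, hM, rfl⟩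
  exact Finset.card_le_card fun e he => SimpleGraph.mem_edgeFinset.2 (hM.1 he)

lemma card_le_matchingNumber [Fintype V] {G : SimpleGraph V} {M : Finset (Sym2 V)}
    (hM : IsMatchingFinset G M) : M.card ≤ matchingNumber G :=
  le_csSup (matchingSet_bddAbove G) ⟨M, hM, rfl⟩

lemma exists_max_matching [Fintype V] (G : SimpleGraph V) :
    ∃ M : Finset (Sym2 V), IsMatchingFinset G M ∧ M.card = matchingNumber G :=
  Nat.sSup_mem (matchingSet_nonempty G) (matchingSet_bddAbove G)

lemma sym2_eq {e : Sym2 V} {x y : V}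
    (hx : x ∈ e) (hy : y ∈ e) (hxy : x ≠ y) : e = s(x, y) :=
  (Sym2.mem_and_mem_iff hxy).1 ⟨hx, hy⟩

lemma insert_matching {G : SimpleGraph V} {M : Finset (Sym2 V)} (hM : IsMatchingFinset G M)
    {a b : V} (hab : s(a, b) ∈ G.edgeSet) (ha : Unm M a) (hb : Unm M b) :
    IsMatchingFinset G (insert s(a, b) M) ∧ (insert s(a, b) M).card = M.card + 1 := by
  have hnm : s(a, b) ∉ M := fun hmem => ha _ hmem (Sym2.mem_mk_left a b)
  refine ⟨⟨?_, ?_⟩, Finset.card_insert_of_notMem hnm⟩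
  · intro e he
    rcases Finset.mem_insert.1 he with rfl | he
    · exact hab
    · exact hM.1 he
  · intro e he f hf hef v hv
    obtain ⟨hve, hvf⟩ := hv
    rcases Finset.mem_insert.1 he with he1 | he2
    · rcases Finset.mem_insert.1 hf with hf1 | hf2
      · exact hef (he1.trans hf1.symm)
      · subst he1
        rcases Sym2.mem_iff.1 hve with h | h
        · exact ha f hf2 (h ▸ hvf)
        · exact hb f hf2 (h ▸ hvf)
    · rcases Finset.mem_insert.1 hf with hf1 | hf2
      · subst hf1
        rcases Sym2.mem_iff.1 hvf with h | h
        · exact ha e he2 (h ▸ hve)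
        · exact hb e he2 (h ▸ hve)
      · exact hM.2 e he2 f hf2 hef v ⟨hve, hvf⟩

lemma card_mem_filter [Fintype V] [DecidableEq V] {e : Sym2 V} (he : ¬ e.IsDiag) :
    (Finset.univ.filter (· ∈ e)).card = 2 := by
  induction e using Sym2.ind with
  | _ a b =>
    have hab : a ≠ b := by simpa using he
    have : (Finset.univ.filter (· ∈ s(a, b))) = {a, b} := by
      ext v; simp [Sym2.mem_iff]
    rw [this, Finset.card_insert_of_notMem (by simp [hab]), Finset.card_singleton]

lemma card_covered [Fintype V] {G : SimpleGraph V} {M : Finset (Sym2 V)}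
    (hM : IsMatchingFinset G M) :
    (Finset.univ.filter (fun v : V => ∃ e ∈ M, v ∈ e)).card = 2 * M.card := by
  classical
  have h1 : Finset.univ.filter (fun v : V => ∃ e ∈ M, v ∈ e)
      = M.biUnion (fun e => Finset.univ.filter (· ∈ e)) := by
    ext v; simp
  rw [h1, Finset.card_biUnion]
  · rw [Finset.sum_congr rfl (fun e he =>
      card_mem_filter (G.not_isDiag_of_mem_edgeSet (hM.1 he)))]
    simp [Finset.sum_const, mul_comm]
  · intro e he f hf hef
    simp only [Finset.disjoint_filter]
    intro v _ hve hvf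
    exact hM.2 e he f hf hef v ⟨hve, hvf⟩

lemma chain'_imp_mem {α : Type*} {R S : α → α → Prop} :
    ∀ {l : List α}, List.Chain' R l → (∀ x ∈ l, ∀ y ∈ l, R x y → S x y) → List.Chain' S l
  | [], _, _ => List.isChain_nil
  | [_], _, _ => List.isChain_singleton _
  | a :: b :: t, hc, himp => by
      simp only [List.Chain', List.isChain_cons_cons] at hc ⊢
      refine ⟨himp a (by simp) b (by simp) hc.1, chain'_imp_mem hc.2 ?_⟩
      intro x hx y hy
      exact himp x (List.mem_cons_of_mem _ hx) y (List.mem_cons_of_mem _ hy)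

/-- Augmenting-path lemma: if a nodup list starting at an `M`-unmatched vertex `u` and ending at
an `M`-unmatched vertex `v ≠ u` has all consecutive pairs forming edges of `M ∪ N`, then there is
a matching one bigger than `M`. -/
lemma aug {G : SimpleGraph V} {N : Finset (Sym2 V)} (hN : IsMatchingFinset G N) :
    ∀ (n : ℕ) (l : List V) (M : Finset (Sym2 V)), l.length ≤ n → IsMatchingFinset G M →
      l.Nodup → l.Chain' (fun x y => s(x, y) ∈ M ∪ N) →
      ∀ u v : V, l.head? = some u → l.getLast? = some v → u ≠ v →
      Unm M u → Unm M v →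
      ∃ M' : Finset (Sym2 V), IsMatchingFinset G M' ∧ M'.card = M.card + 1 := by
  intro n
  induction n with
  | zero =>
    intro l M hlen _ _ _ u v hh _ _ _ _
    rw [Nat.le_zero, List.length_eq_zero_iff] at hlen
    subst hlen; simp at hh
  | succ n ih =>
    rintro l M hlen hM hnd hch u v hh hlast huv hu hv
    cases l with
    | nil => simp at hh
    | cons a t =>
      have hau : a = u := by simpa using hh
      subst hau
      cases t with
      | nil =>
        have : a = v := by simpa using hlast
        exact absurd this huv
      | cons b rest =>
        obtain ⟨hu_nin, hnd'⟩ := List.nodup_cons.1 hnd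
        obtain ⟨hb_nin, hnd''⟩ := List.nodup_cons.1 hnd'
        have hub : a ≠ b := fun h => hu_nin (h ▸ List.mem_cons_self (a := b) (l := rest))
        have he1 : s(a, b) ∈ M ∪ N := (List.isChain_cons_cons.1 hch).1
        have he1nM : s(a, b) ∉ M := fun hm => hu (s(a, b)) hm (Sym2.mem_mk_left a b)
        have he1N : s(a, b) ∈ N := (Finset.mem_union.1 he1).resolve_left he1nM
        cases rest with
        | nil =>
          have hbv : b = v := by simpa using hlast
          subst hbv
          exact ⟨_, insert_matching hM (hN.1 he1N) hu hv⟩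
        | cons c rest' =>
          have huc : a ≠ c := by intro h; subst h; exact hu_nin (by simp)
          have hbc : b ≠ c := by intro h; subst h; exact hb_nin (by simp)
          have he3 : s(b, c) ∈ M ∪ N := (List.isChain_cons_cons.1 (List.isChain_cons_cons.1 hch).2).1
          have he13 : s(a, b) ≠ s(b, c) := by
            intro hq
            have : a ∈ s(b, c) := hq ▸ Sym2.mem_mk_left a b
            rcases Sym2.mem_iff.1 this with h | h
            · exact hub h
            · exact huc h
          have he3M : s(b, c) ∈ M := by
            rcases Finset.mem_union.1 he3 with hm | hn
            · exact hm
            · exact absurd ⟨Sym2.mem_mk_right a b, Sym2.mem_mk_left b c⟩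
                (hN.2 _ he1N _ hn he13 b)
          set M₁ : Finset (Sym2 V) := insert s(a, b) (M.erase s(b, c)) with hM₁def
          have he1nE : s(a, b) ∉ M.erase s(b, c) := fun hq => he1nM (Finset.mem_of_mem_erase hq)
          have hcard1 : M₁.card = M.card := by
            rw [hM₁def, Finset.card_insert_of_notMem he1nE, Finset.card_erase_of_mem he3M,
              Nat.sub_add_cancel (Finset.card_pos.mpr ⟨_, he3M⟩)]
          have hM₁ : IsMatchingFinset G M₁ := by
            constructor
            · intro e he
              rcases Finset.mem_insert.1 he with rfl | he
              · exact hN.1 he1N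
              · exact hM.1 (Finset.mem_of_mem_erase he)
            · intro e he f hf hef w hw
              obtain ⟨hwe, hwf⟩ := hw
              rcases Finset.mem_insert.1 he with he0 | he0
              · rcases Finset.mem_insert.1 hf with hf0 | hf0
                · exact hef (he0.trans hf0.symm)
                · subst he0
                  have hfM := Finset.mem_of_mem_erase hf0
                  rcases Sym2.mem_iff.1 hwe with h | h
                  · exact hu f hfM (h ▸ hwf)
                  · refine hM.2 f hfM (s(b, c)) he3M (Finset.ne_of_mem_erase hf0) b
                      ⟨h ▸ hwf, Sym2.mem_mk_left b c⟩
              · rcases Finset.mem_insert.1 hf with hf0 | hf0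
                · subst hf0
                  have heM := Finset.mem_of_mem_erase he0
                  rcases Sym2.mem_iff.1 hwf with h | h
                  · exact hu e heM (h ▸ hwe)
                  · refine hM.2 e heM (s(b, c)) he3M (Finset.ne_of_mem_erase he0) b
                      ⟨h ▸ hwe, Sym2.mem_mk_left b c⟩
                · exact hM.2 e (Finset.mem_of_mem_erase he0) f (Finset.mem_of_mem_erase hf0)
                    hef w ⟨hwe, hwf⟩
          have hlen' : (c :: rest').length ≤ n := by
            simp only [List.length_cons] at hlen ⊢; omega
          have hch' : (c :: rest').Chain' (fun x y => s(x, y) ∈ M₁ ∪ N) := by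
            refine chain'_imp_mem ((List.isChain_cons_cons.1 hch).2).tail ?_
            intro x hx y hy hxy
            rcases Finset.mem_union.1 hxy with hm | hn
            · refine Finset.mem_union_left _ (Finset.mem_insert_of_mem (Finset.mem_erase.2 ⟨?_, hm⟩))
              intro hq
              have : b ∈ s(x, y) := hq ▸ Sym2.mem_mk_left b c
              rcases Sym2.mem_iff.1 this with h | h
              · exact hb_nin (h ▸ hx)
              · exact hb_nin (h ▸ hy)
            · exact Finset.mem_union_right _ hn
          have hlast' : (c :: rest').getLast? = some v := by
            rw [List.getLast?_cons_cons, List.getLast?_cons_cons] at hlast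
            exact hlast
          have hcv : c ≠ v := fun h => hv (s(b, c)) he3M (h ▸ Sym2.mem_mk_right b c)
          have hUc : Unm M₁ c := by
            intro e he hce
            rcases Finset.mem_insert.1 he with rfl | he0
            · rcases Sym2.mem_iff.1 hce with h | h
              · exact huc h.symm
              · exact hbc h.symm
            · exact hM.2 e (Finset.mem_of_mem_erase he0) (s(b, c)) he3M
                (Finset.ne_of_mem_erase he0) c ⟨hce, Sym2.mem_mk_right b c⟩
          have hUv : Unm M₁ v := by
            intro e he hve
            rcases Finset.mem_insert.1 he with rfl | he0
            · rcases Sym2.mem_iff.1 hve with h | h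
              · exact huv h.symm
              · exact hv (s(b, c)) he3M (h ▸ Sym2.mem_mk_left b c)
            · exact hv e (Finset.mem_of_mem_erase he0) hve
          obtain ⟨M', hM', hcM'⟩ := ih (c :: rest') M₁ hlen' hM₁ hnd'' hch' c v rfl hlast' hcv hUc hUv
          exact ⟨M', hM', by rw [hcM', hcard1]⟩

/-- Those edges of `A` with an endpoint in `C`. -/
noncomputable def filtC (A : Finset (Sym2 V)) (C : V → Prop) : Finset (Sym2 V) :=
  A.filter (fun e => ∃ x ∈ e, C x)

/-- Swapping two matchings on a vertex set `C`. -/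
noncomputable def swapM (A B : Finset (Sym2 V)) (C : V → Prop) : Finset (Sym2 V) :=
  filtC A C ∪ B.filter (fun e => ¬ ∃ x ∈ e, C x)

lemma mem_filtC {A : Finset (Sym2 V)} {C : V → Prop} {e : Sym2 V} :
    e ∈ filtC A C ↔ e ∈ A ∧ ∃ x ∈ e, C x := Finset.mem_filter

lemma filtC_card_le {A : Finset (Sym2 V)} {C : V → Prop} : (filtC A C).card ≤ A.card :=
  Finset.card_le_card (Finset.filter_subset _ _)

/-- Swapping two matchings on a closed vertex set gives a matching. -/
lemma swap_matching {G : SimpleGraph V} {A B : Finset (Sym2 V)}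
    (hA : IsMatchingFinset G A) (hB : IsMatchingFinset G B) (C : V → Prop)
    (hcl : ∀ e, e ∈ A ∪ B → e ∉ A ∩ B → ∀ x ∈ e, C x → ∀ y ∈ e, C y) :
    IsMatchingFinset G (swapM A B C) := by
  constructor
  · intro e he
    rcases Finset.mem_union.1 he with he | he
    · exact hA.1 (Finset.mem_filter.1 he).1
    · exact hB.1 (Finset.mem_filter.1 he).1
  · intro e he f hf hef w hw
    obtain ⟨hwe, hwf⟩ := hw
    rcases Finset.mem_union.1 he with he | he <;> rcases Finset.mem_union.1 hf with hf | hf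
    · exact hA.2 e (Finset.mem_filter.1 he).1 f (Finset.mem_filter.1 hf).1 hef w ⟨hwe, hwf⟩
    · obtain ⟨heA, x, hxe, hPx⟩ := Finset.mem_filter.1 he
      obtain ⟨hfB, hnf⟩ := Finset.mem_filter.1 hf
      by_cases heB : e ∈ B
      · exact hB.2 e heB f hfB hef w ⟨hwe, hwf⟩
      · have hPw : C w := hcl e (Finset.mem_union_left _ heA)
          (fun hq => heB (Finset.mem_inter.1 hq).2) x hxe hPx w hwe
        exact hnf ⟨w, hwf, hPw⟩
    · obtain ⟨hfA, x, hxf, hPx⟩ := Finset.mem_filter.1 hf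
      obtain ⟨heB, hne⟩ := Finset.mem_filter.1 he
      by_cases hfB : f ∈ B
      · exact hB.2 e heB f hfB hef w ⟨hwe, hwf⟩
      · have hPw : C w := hcl f (Finset.mem_union_left _ hfA)
          (fun hq => hfB (Finset.mem_inter.1 hq).2) x hxf hPx w hwf
        exact hne ⟨w, hwe, hPw⟩
    · exact hB.2 e (Finset.mem_filter.1 he).1 f (Finset.mem_filter.1 hf).1 hef w ⟨hwe, hwf⟩

lemma swap_card {A B : Finset (Sym2 V)} (C : V → Prop) :
    (swapM A B C).card = (filtC A C).card + B.card - (filtC B C).card := by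
  unfold swapM filtC
  rw [Finset.card_union_of_disjoint, ← Finset.card_filter_add_card_filter_not
    (s := B) (fun e => ∃ x ∈ e, C x)]
  · omega
  · rw [Finset.disjoint_left]
    intro e he hf
    exact (Finset.mem_filter.1 hf).2 (Finset.mem_filter.1 he).2

lemma swap_unm_left {A B : Finset (Sym2 V)} {C : V → Prop} {w : V}
    (hCw : C w) (hw : Unm A w) : Unm (swapM A B C) w := by
  intro e he hwe
  rcases Finset.mem_union.1 he with he | he
  · exact hw e (Finset.mem_filter.1 he).1 hwe
  · exact (Finset.mem_filter.1 he).2 ⟨w, hwe, hCw⟩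

lemma swap_unm_right {A B : Finset (Sym2 V)} {C : V → Prop} {w : V}
    (hcl : ∀ e, e ∈ A ∪ B → e ∉ A ∩ B → ∀ x ∈ e, C x → ∀ y ∈ e, C y)
    (hCw : ¬ C w) (hw : Unm B w) : Unm (swapM A B C) w := by
  intro e he hwe
  rcases Finset.mem_union.1 he with he | he
  · obtain ⟨heA, x, hxe, hPx⟩ := Finset.mem_filter.1 he
    have henB : e ∈ A ∩ B → False := fun hq => hw e (Finset.mem_inter.1 hq).2 hwe
    exact hCw (hcl e (Finset.mem_union_left _ heA) henB x hxe hPx w hwe)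
  · exact hw e (Finset.mem_filter.1 he).1 hwe

lemma lift_matching {G : SimpleGraph V} {x : V} {M' : Finset (Sym2 {v : V // v ≠ x})}
    (hM' : IsMatchingFinset (delVert G x) M') :
    IsMatchingFinset G (M'.image (Sym2.map Subtype.val)) ∧
      (M'.image (Sym2.map Subtype.val)).card = M'.card ∧
      Unm (M'.image (Sym2.map Subtype.val)) x := by
  have hinj : Function.Injective (Sym2.map (Subtype.val : {v : V // v ≠ x} → V)) :=
    Sym2.map.injective Subtype.val_injective
  refine ⟨⟨?_, ?_⟩, Finset.card_image_of_injective _ hinj, ?_⟩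
  · intro e he
    obtain ⟨e', he', rfl⟩ := Finset.mem_image.1 he
    have := hM'.1 he'
    induction e' using Sym2.ind with
    | _ a b =>
      simp only [SimpleGraph.mem_edgeSet] at this ⊢
      simp only [Sym2.map_pair_eq, SimpleGraph.mem_edgeSet]
      exact this
  · intro e he f hf hef w hw
    obtain ⟨hwe, hwf⟩ := hw
    obtain ⟨e', he', rfl⟩ := Finset.mem_image.1 he
    obtain ⟨f', hf', rfl⟩ := Finset.mem_image.1 hf
    obtain ⟨a, hae, ha⟩ := Sym2.mem_map.1 hwe
    obtain ⟨b, hbf, hb⟩ := Sym2.mem_map.1 hwf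
    have hab : a = b := Subtype.val_injective (ha.trans hb.symm)
    subst hab
    exact hM'.2 e' he' f' hf' (fun hq => hef (by rw [hq])) a ⟨hae, hbf⟩
  · intro e he hxe
    obtain ⟨e', he', rfl⟩ := Finset.mem_image.1 he
    obtain ⟨a, hae, ha⟩ := Sym2.mem_map.1 hxe
    exact a.2 ha

lemma not_unm_iff {M : Finset (Sym2 V)} {v : V} : ¬ Unm M v ↔ ∃ e ∈ M, v ∈ e := by
  unfold Unm; push_neg; rfl

end GallaiAux

open GallaiAux in
theorem stmt_19 {V : Type*} [Fintype V] (G : SimpleGraph V) (hconn : G.Connected)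
    (h : ∀ x : V, matchingNumber (delVert G x) = matchingNumber G) :
    FactorCritical G ∧ Fintype.card V = 2 * matchingNumber G + 1 := by
  classical
  set ν := matchingNumber G with hν
  -- a maximum matching of `G \ t`, viewed inside `G`
  have hdel : ∀ t : V, ∃ N : Finset (Sym2 V),
      IsMatchingFinset G N ∧ N.card = ν ∧ Unm N t := by
    intro t
    obtain ⟨Mt, hMt, hMtc⟩ := exists_max_matching (delVert G t)
    obtain ⟨h1, h2, h3⟩ := lift_matching hMt
    exact ⟨_, h1, by rw [h2, hMtc, h t], h3⟩
  -- key step: no maximum matching misses two distinct vertices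
  have no_two : ¬ ∃ (M : Finset (Sym2 V)) (u v : V), IsMatchingFinset G M ∧ M.card = ν ∧
      u ≠ v ∧ Unm M u ∧ Unm M v := by
    rintro hbad
    set S : Set ℕ := {d | ∃ (M : Finset (Sym2 V)) (u v : V), IsMatchingFinset G M ∧
      M.card = ν ∧ u ≠ v ∧ Unm M u ∧ Unm M v ∧ G.dist u v = d} with hS
    have hSne : S.Nonempty := by
      obtain ⟨M, u, v, h1, h2, h3, h4, h5⟩ := hbad
      exact ⟨G.dist u v, M, u, v, h1, h2, h3, h4, h5, rfl⟩
    obtain ⟨M, u, v, hM, hMc, huv, hu, hv, hd⟩ := Nat.sInf_mem hSne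
    set d := sInf S with hdd
    have hmin : ∀ k ∈ S, d ≤ k := fun k hk => Nat.sInf_le hk
    -- d ≥ 2
    have hd0 : d ≠ 0 := by
      intro h0
      exact huv (hconn.dist_eq_zero_iff.mp (hd.trans h0))
    have hd1 : d ≠ 1 := by
      intro h1
      have hadj : G.Adj u v := SimpleGraph.dist_eq_one_iff_adj.mp (hd.trans h1)
      obtain ⟨_, hcard⟩ := insert_matching hM ((SimpleGraph.mem_edgeSet G).mpr hadj) hu hv
      have := card_le_matchingNumber (insert_matching hM ((SimpleGraph.mem_edgeSet G).mpr hadj) hu hv).1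
      omega
    have hd2 : 2 ≤ d := by omega
    -- middle vertex t
    obtain ⟨p, hp⟩ := hconn.exists_walk_length_eq_dist u v
    obtain ⟨t, hadjut, q, rfl⟩ : ∃ (t : V) (hadj : G.Adj u t) (q : G.Walk t v),
        p = SimpleGraph.Walk.cons hadj q := by
      cases p with
      | nil => exact absurd rfl huv
      | cons hadj q => exact ⟨_, hadj, q, rfl⟩
    have hqlen : q.length = d - 1 := by
      simp only [SimpleGraph.Walk.length_cons] at hp; omega
    have htu : t ≠ u := hadjut.ne'
    have hdtv : G.dist t v ≤ d - 1 := hqlen ▸ SimpleGraph.dist_le q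
    have htv : t ≠ v := by
      rintro rfl
      have : G.dist u t = 1 := SimpleGraph.dist_eq_one_iff_adj.mpr hadjut
      omega
    have hdut : G.dist u t = 1 := SimpleGraph.dist_eq_one_iff_adj.mpr hadjut
    -- t is matched by M
    have htM : ¬ Unm M t := by
      intro hUt
      have : G.dist t v ∈ S := ⟨M, t, v, hM, hMc, htv, hUt, hv, rfl⟩
      have := hmin _ this
      omega
    -- a maximum matching missing t
    obtain ⟨N, hN, hNc, hNt⟩ := hdel t
    have hNu : ¬ Unm N u := by
      intro hUu
      have : G.dist u t ∈ S := ⟨N, u, t, hN, hNc, htu.symm, hUu, hNt, rfl⟩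
      have := hmin _ this
      omega
    have hNv : ¬ Unm N v := by
      intro hUv
      have : G.dist t v ∈ S := ⟨N, t, v, hN, hNc, htv, hNt, hUv, rfl⟩
      have := hmin _ this
      omega
    -- the symmetric-difference graph and the component of u
    set D : SimpleGraph V := {
      Adj := fun x y => x ≠ y ∧ s(x, y) ∈ M ∪ N ∧ s(x, y) ∉ M ∩ N
      symm := ⟨by
        rintro x y ⟨h1, h2, h3⟩
        refine ⟨h1.symm, ?_, ?_⟩
        · rwa [Sym2.eq_swap]
        · rwa [Sym2.eq_swap]⟩
      loopless := ⟨fun x hx => hx.1 rfl⟩ } with hD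
    have hDsymm : ∀ {x y : V}, D.Adj x y → D.Adj y x := fun hxy => D.symm.symm _ _ hxy
    set C : V → Prop := fun x => D.Reachable u x with hC
    have hcl : ∀ e, e ∈ M ∪ N → e ∉ M ∩ N → ∀ x ∈ e, C x → ∀ y ∈ e, C y := by
      intro e he hne x hx hCx y hy
      by_cases hxy : x = y
      · exact hxy ▸ hCx
      · have : D.Adj x y := ⟨hxy, by rw [← sym2_eq hx hy hxy]; exact he,
          by rw [← sym2_eq hx hy hxy]; exact hne⟩
        exact hCx.trans this.reachable
    have hCu : C u := SimpleGraph.Reachable.refl u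
    -- v is not in the component of u (else there is an augmenting path)
    have hvC : ¬ C v := by
      intro hCv
      obtain ⟨w⟩ := hCv
      set pw := w.toPath with hpw
      have hnd : pw.1.support.Nodup := pw.2.support_nodup
      have hch : pw.1.support.Chain' (fun x y => s(x, y) ∈ M ∪ N) := by
        refine List.IsChain.imp ?_ pw.1.isChain_adj_support
        intro x y hxy
        exact hxy.2.1
      have hh : pw.1.support.head? = some u := by
        rw [pw.1.support_eq_cons]; rfl
      have hlast : pw.1.support.getLast? = some v := by
        rw [List.getLast?_eq_getLast pw.1.support_ne_nil, pw.1.getLast_support]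
      obtain ⟨M', hM', hcM'⟩ := aug hN pw.1.support.length pw.1.support M le_rfl hM hnd hch
        u v hh hlast huv hu hv
      have := card_le_matchingNumber hM'
      omega
    -- the two swapped matchings
    have hcl' : ∀ e, e ∈ N ∪ M → e ∉ N ∩ M → ∀ x ∈ e, C x → ∀ y ∈ e, C y := by
      intro e he hne
      exact hcl e (by rwa [Finset.union_comm]) (by rwa [Finset.inter_comm])
    have hN'm : IsMatchingFinset G (swapM M N C) := swap_matching hM hN C hcl
    have hM'm : IsMatchingFinset G (swapM N M C) := swap_matching hN hM C hcl'
    have hcard1 := swap_card (A := M) (B := N) C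
    have hcard2 := swap_card (A := N) (B := M) C
    have hle1 : (swapM M N C).card ≤ ν := card_le_matchingNumber hN'm
    have hle2 : (swapM N M C).card ≤ ν := card_le_matchingNumber hM'm
    have hfle1 : (filtC M C).card ≤ ν := hMc ▸ filtC_card_le
    have hfle2 : (filtC N C).card ≤ ν := hNc ▸ filtC_card_le
    have hN'c : (swapM M N C).card = ν := by omega
    have hM'c : (swapM N M C).card = ν := by omega
    by_cases hCt : C t
    · -- swapM N M C misses t and v, at distance < d : contradiction
      have h1 : Unm (swapM N M C) t := swap_unm_left hCt hNt
      have h2 : Unm (swapM N M C) v := swap_unm_right hcl' hvC hv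
      have : G.dist t v ∈ S := ⟨swapM N M C, t, v, hM'm, hM'c, htv, h1, h2, rfl⟩
      have := hmin _ this
      omega
    · -- swapM M N C misses u and t, at distance < d : contradiction
      have h3 : Unm (swapM M N C) u := swap_unm_left hCu hu
      have h4 : Unm (swapM M N C) t := swap_unm_right hcl hCt hNt
      have : G.dist u t ∈ S := ⟨swapM M N C, u, t, hN'm, hN'c, htu.symm, h3, h4, rfl⟩
      have := hmin _ this
      omega
  -- |V| ≥ 2ν + 1
  have hne : Nonempty V := hconn.nonempty
  obtain ⟨x0⟩ := hne
  have hVpos : 1 ≤ Fintype.card V := Fintype.card_pos_iff.mpr ⟨x0⟩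
  obtain ⟨N0, hN0, hN0c, hN0x⟩ := hdel x0
  have hgev : 2 * ν + 1 ≤ Fintype.card V := by
    have hsub : Finset.univ.filter (fun v : V => ∃ e ∈ N0, v ∈ e) ⊆ Finset.univ.erase x0 := by
      intro v hvmem
      obtain ⟨e, he, hve⟩ := (Finset.mem_filter.1 hvmem).2
      exact Finset.mem_erase.2 ⟨fun hq => hN0x e he (hq ▸ hve), Finset.mem_univ v⟩
    have hle := Finset.card_le_card hsub
    rw [card_covered hN0, hN0c, Finset.card_erase_of_mem (Finset.mem_univ x0),
      Finset.card_univ] at hle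
    omega
  -- |V| ≤ 2ν + 1
  obtain ⟨Mm, hMm, hMmc⟩ := exists_max_matching G
  have hlev : Fintype.card V ≤ 2 * ν + 1 := by
    by_contra hgt
    push_neg at hgt
    have hcovm : (Finset.univ.filter (fun v : V => ∃ e ∈ Mm, v ∈ e)).card = 2 * ν := by
      rw [card_covered hMm, hMmc]
    have hsplit := Finset.card_filter_add_card_filter_not
      (s := (Finset.univ : Finset V)) (fun v : V => ∃ e ∈ Mm, v ∈ e)
    rw [hcovm, Finset.card_univ] at hsplit
    have h2 : 1 < (Finset.univ.filter (fun v : V => ¬ ∃ e ∈ Mm, v ∈ e)).card := by omega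
    obtain ⟨a, ha, b, hb, hab⟩ := Finset.one_lt_card.1 h2
    have hUa : Unm Mm a := fun e he hae => (Finset.mem_filter.1 ha).2 ⟨e, he, hae⟩
    have hUb : Unm Mm b := fun e he hbe => (Finset.mem_filter.1 hb).2 ⟨e, he, hbe⟩
    exact no_two ⟨Mm, a, b, hMm, hMmc, hab, hUa, hUb⟩
  have hcardV : Fintype.card V = 2 * ν + 1 := le_antisymm hlev hgev
  refine ⟨⟨hconn, ?_⟩, hcardV⟩
  intro x
  obtain ⟨Mx, hMx, hMxc⟩ := exists_max_matching (delVert G x)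
  have hcVx : Fintype.card {v : V // v ≠ x} = 2 * ν := by
    have h1 : Fintype.card {v : V // ¬ v = x}
        = Fintype.card V - Fintype.card {v : V // v = x} :=
      Fintype.card_subtype_compl _
    rw [Fintype.card_subtype_eq] at h1
    have h2 : Fintype.card {v : V // v ≠ x} = Fintype.card {v : V // ¬ v = x} :=
      Fintype.card_congr (Equiv.refl _)
    omega
  have hcovx := card_covered hMx
  rw [hMxc, h x] at hcovx
  have hunivx := Finset.eq_univ_of_card _ (hcovx.trans hcVx.symm)
  refine ⟨Mx, hMx, fun v => ?_⟩
  have hvmem := hunivx.symm ▸ Finset.mem_univ v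
  simp only [Finset.mem_filter] at hvmem
  exact hvmem.2
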